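/- Backward lightcone decomposition: For a layered circuit E = E_d ∘ ⋯ ∘ E₁ of gates on a finite set Λ of sites and any region S ⊆ Λ, the full circuit factorizes as E = Q ∘ B_{S̄}, where B_{S̄} is the backward lightcone of the complement S̄ and Q = B_S \ B_{S̄} is a sub-circuit consisting of the remaining gates, and Supp(Q) ⊆ S. -/

import Mathlib

/-- A gate `g` is in the backward lightcone of the region `T` (Definition 1):
either its support meets `T`, or it meets the support of a lightcone gate in a
strictly higher layer. -/
inductive InCone {G Λ : Type*} (layer : G → ℕ) (supp : G → Set Λ) (T : Set Λ) : G → Prop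
  | base (g : G) : (supp g ∩ T).Nonempty → InCone layer supp T g
  | step (g h : G) : InCone layer supp T h → layer g < layer h →
      (supp g ∩ supp h).Nonempty → InCone layer supp T g

/-- Apply a list of gates, the head of the list acting last. -/
def applyGates {V G : Type*} (ch : G → V → V) : List G → V → V
  | [], x => x
  | g :: l, x => ch g (applyGates ch l x)


theorem applyGates_comm {V G : Type*} (ch : G → V → V) (g : G) :
    ∀ l : List G, (∀ h ∈ l, ∀ x, ch g (ch h x) = ch h (ch g x)) →
      ∀ x, ch g (applyGates ch l x) = applyGates ch l (ch g x)
  | [], _, _ => rfl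
  | h :: l, H, x => by
      simp only [applyGates]
      rw [H h List.mem_cons_self,
        applyGates_comm ch g l (fun h' hh' => H h' (List.mem_cons_of_mem _ hh'))]

theorem factor_lemma {V G : Type*} (layer : G → ℕ) (ch : G → V → V)
    (P : G → Prop) [DecidablePred P]
    (hkey : ∀ g h : G, g ≠ h → P g → ¬ P h → layer h ≤ layer g →
      ∀ x, ch g (ch h x) = ch h (ch g x)) :
    ∀ L : List G, L.Nodup → L.Pairwise (fun a b => layer b ≤ layer a) →
      ∀ x, applyGates ch L x =
        applyGates ch (L.filter fun g => decide (¬ P g))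
          (applyGates ch (L.filter fun g => decide (P g)) x)
  | [], _, _, x => rfl
  | g :: l, hnd, hp, x => by
      have hnd' := hnd.of_cons
      have hp' := hp.of_cons
      have hg_notmem : g ∉ l := (List.nodup_cons.mp hnd).1
      have hlay : ∀ h ∈ l, layer h ≤ layer g := fun h hh =>
        (List.pairwise_cons.mp hp).1 h hh
      by_cases hg : P g
      · have h1 : (g :: l).filter (fun g => decide (P g)) =
            g :: l.filter (fun g => decide (P g)) := by
          simp [List.filter_cons, hg]
        have h2 : (g :: l).filter (fun g => decide (¬ P g)) =
            l.filter (fun g => decide (¬ P g)) := by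
          simp [List.filter_cons, hg]
        rw [h1, h2]
        show ch g (applyGates ch l x) = _
        rw [factor_lemma layer ch P hkey l hnd' hp' x]
        show ch g (applyGates ch (l.filter fun g => decide (¬ P g)) _) = _
        rw [applyGates_comm ch g _ ?_]
        · rfl
        · intro h hh
          have hhl : h ∈ l := List.mem_of_mem_filter hh
          have hPh : ¬ P h := by
            have := List.of_mem_filter hh
            simpa using this
          exact hkey g h (fun e => hg_notmem (e ▸ hhl)) hg hPh (hlay h hhl)
      · have h1 : (g :: l).filter (fun g => decide (P g)) =
            l.filter (fun g => decide (P g)) := by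
          simp [List.filter_cons, hg]
        have h2 : (g :: l).filter (fun g => decide (¬ P g)) =
            g :: l.filter (fun g => decide (¬ P g)) := by
          simp [List.filter_cons, hg]
        rw [h1, h2]
        show ch g (applyGates ch l x) = ch g _
        rw [factor_lemma layer ch P hkey l hnd' hp' x]

open scoped Classical in
/-- Fact 2 (backward lightcone decomposition): for a layered circuit `E` (given
as a list `L` of gates in layer-descending order, gates in the same layer having
disjoint supports, disjointly-supported gates commuting), the circuit factors as
`E = Q ∘ B_{S̄}` where `B_{S̄}` consists of the gates in the backward lightcone of
`Sᶜ` and `Q` of the remaining gates, and every gate of `Q` has support inside `S`. -/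
theorem stmt16 {V Λ G : Type*}
    (layer : G → ℕ) (supp : G → Set Λ) (ch : G → V → V)
    (hcomm : ∀ g h : G, Disjoint (supp g) (supp h) →
      ∀ x, ch g (ch h x) = ch h (ch g x))
    (hlayerdisj : ∀ g h : G, g ≠ h → layer g = layer h → Disjoint (supp g) (supp h))
    (S : Set Λ)
    (L : List G) (hLall : ∀ g : G, g ∈ L) (hLnodup : L.Nodup)
    (hLsorted : L.Pairwise fun a b => layer b ≤ layer a) :
    (∀ x : V,
        applyGates ch L x =
          applyGates ch (L.filter fun g => decide (¬ InCone layer supp Sᶜ g))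
            (applyGates ch (L.filter fun g => decide (InCone layer supp Sᶜ g)) x)) ∧
    (∀ g : G, ¬ InCone layer supp Sᶜ g → supp g ⊆ S) := by
  classical
  constructor
  · intro x
    refine factor_lemma layer ch (InCone layer supp Sᶜ) ?_ L hLnodup hLsorted x
    intro g h hne hg hh hle x
    apply hcomm
    by_contra hdis
    rw [Set.not_disjoint_iff_nonempty_inter] at hdis
    rcases lt_or_eq_of_le hle with hlt | heq
    · exact hh (InCone.step h g hg hlt ⟨hdis.choose, hdis.choose_spec.2, hdis.choose_spec.1⟩)
    · exact absurd (hlayerdisj g h hne heq.symm) (by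
        rw [Set.not_disjoint_iff_nonempty_inter]; exact hdis)
  · intro g hg x hx
    by_contra hxS
    exact hg (InCone.base g ⟨x, hx, hxS⟩)
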